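/- A countable group of subexponential growth is amenable. Precisely, if G is generated by a finite symmetric set S with lim_{n→∞} |B_S(n)|^{1/n} = 1, where B_S(n) is the ball of radius n in the word metric, then G satisfies the Følner criterion: for every ε > 0 and finite F₀ ⊆ G there exists a finite F ⊆ G with |F ∩ gF| ≥ (1−ε)|F| for all g ∈ F₀. -/

import Mathlib

open scoped Classical

/-- A countable group of subexponential growth satisfies the Følner
criterion. Here `B S n` is the ball of radius `n` in the word metric determined by the
finite symmetric generating set `S`. -/
theorem folner_of_subexponential_growth
    {G : Type*} [Group G] [Countable G] (S : Finset G)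
    (hsymm : ∀ s ∈ S, s⁻¹ ∈ S)
    (hgen : Subgroup.closure (S : Set G) = ⊤)
    (B : ℕ → Set G)
    (hB : ∀ n, B n = {g : G | ∃ l : List G, l.length ≤ n ∧ (∀ x ∈ l, x ∈ S) ∧ l.prod = g})
    (hgrowth : Filter.Tendsto (fun n : ℕ => (Nat.card (B n) : ℝ) ^ ((1 : ℝ) / n))
      Filter.atTop (nhds 1)) :
    ∀ ε > (0 : ℝ), ∀ F₀ : Finset G, ∃ F : Finset G, F.Nonempty ∧
      ∀ g ∈ F₀, (1 - ε) * (F.card : ℝ) ≤ ((F ∩ F.image (fun x => g * x)).card : ℝ) := by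
  intro ε hε F₀
  -- basic facts about balls
  have hone : ∀ n, (1 : G) ∈ B n := by
    intro n; rw [hB]; exact ⟨[], by simp⟩
  have hmono : ∀ {n m : ℕ}, n ≤ m → B n ⊆ B m := by
    intro n m hnm g hg
    rw [hB] at hg ⊢
    obtain ⟨l, hl, hlS, hlp⟩ := hg
    exact ⟨l, hl.trans hnm, hlS, hlp⟩
  have hmul : ∀ {k n : ℕ} {g x : G}, g ∈ B k → x ∈ B n → g * x ∈ B (k + n) := by
    intro k n g x hg hx
    rw [hB] at hg hx ⊢
    obtain ⟨l, hl, hlS, hlp⟩ := hg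
    obtain ⟨l', hl', hlS', hlp'⟩ := hx
    refine ⟨l ++ l', ?_, ?_, ?_⟩
    · simpa using Nat.add_le_add hl hl'
    · intro y hy; rcases List.mem_append.1 hy with h | h
      · exact hlS y h
      · exact hlS' y h
    · simp [hlp, hlp']
  -- finiteness of balls
  have hfin : ∀ n, (B n).Finite := by
    intro n
    induction n with
    | zero =>
      have : B 0 ⊆ {1} := by
        intro g hg; rw [hB] at hg
        obtain ⟨l, hl, _, hlp⟩ := hg
        simp only [Nat.le_zero, List.length_eq_zero_iff] at hl
        simp [hl] at hlp
        simp [← hlp]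
      exact (Set.finite_singleton 1).subset this
    | succ n ih =>
      have hsub : B (n + 1) ⊆ B n ∪ ⋃ s ∈ (S : Set G), (fun x => s * x) '' B n := by
        intro g hg
        rw [hB] at hg
        obtain ⟨l, hl, hlS, hlp⟩ := hg
        match l with
        | [] =>
          left; rw [hB]; exact ⟨[], by simpa using hlp⟩
        | x :: t =>
          right
          refine Set.mem_biUnion (hlS x (by simp)) ⟨t.prod, ?_, by simpa using hlp⟩
          rw [hB]
          exact ⟨t, by simpa using hl, fun y hy => hlS y (by simp [hy]), rfl⟩
      refine ((ih.union (S.finite_toSet.biUnion fun s _ => ih.image _))).subset hsub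
  -- cardinalities
  set a : ℕ → ℕ := fun n => (hfin n).toFinset.card with ha
  have haN : ∀ n, Nat.card (B n) = a n := by
    intro n
    rw [Nat.card_coe_set_eq, Set.ncard_eq_toFinset_card _ (hfin n)]
  have hapos : ∀ n, 0 < a n := by
    intro n
    exact Finset.card_pos.2 ⟨1, (hfin n).mem_toFinset.2 (hone n)⟩
  -- every element lies in some ball
  have hball : ∀ g : G, ∃ k, g ∈ B k := by
    intro g
    have hg : g ∈ Subgroup.closure (S : Set G) := hgen ▸ Subgroup.mem_top g
    have hg' : g ∈ Submonoid.closure ((S : Set G) ∪ (S : Set G)⁻¹) := by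
      rw [← Subgroup.closure_toSubmonoid]; exact hg
    obtain ⟨l, hlS, hlp⟩ := Submonoid.exists_list_of_mem_closure hg'
    refine ⟨l.length, ?_⟩
    rw [hB]
    refine ⟨l, le_refl _, ?_, hlp⟩
    intro x hx
    rcases hlS x hx with h | h
    · exact h
    · have : x⁻¹ ∈ S := h
      simpa using hsymm _ this
  -- uniform radius for F₀
  obtain ⟨k₀, hk₀⟩ : ∃ k, ∀ g ∈ F₀, g ∈ B k := by
    refine ⟨F₀.sup fun g => Nat.find (hball g), fun g hg => ?_⟩
    exact hmono (Finset.le_sup hg) (Nat.find_spec (hball g))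
  set k := k₀ + 1 with hk
  have hkpos : 0 < k := Nat.succ_pos _
  have hkball : ∀ g ∈ F₀, g ∈ B k := fun g hg => hmono (Nat.le_succ _) (hk₀ g hg)
  -- key: there is n with a (n + k) ≤ (1 + ε) * a n
  have hkey : ∃ n, (a (n + k) : ℝ) ≤ (1 + ε) * a n := by
    by_contra hcon
    push_neg at hcon
    have hgrow : ∀ m : ℕ, ((1 + ε) ^ m : ℝ) ≤ a (m * k) := by
      intro m
      induction m with
      | zero => simpa using (Nat.one_le_cast (α := ℝ)).2 (hapos 0)
      | succ m ih =>
        have h1 : (1 + ε) * a (m * k) < a (m * k + k) := hcon (m * k)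
        have h2 : ((1 + ε) ^ (m + 1) : ℝ) ≤ (1 + ε) * a (m * k) := by
          rw [pow_succ, mul_comm ((1+ε)^m) (1+ε)]
          exact mul_le_mul_of_nonneg_left ih (by linarith)
        have : (m + 1) * k = m * k + k := by ring
        rw [this]
        linarith
    -- subsequence tends to 1
    have htop : Filter.Tendsto (fun m : ℕ => m * k) Filter.atTop Filter.atTop :=
      Filter.tendsto_atTop_atTop.2 fun b => ⟨b, fun m hm =>
        le_trans hm (Nat.le_mul_of_pos_right m hkpos)⟩
    have hsub : Filter.Tendsto (fun m : ℕ => (Nat.card (B (m * k)) : ℝ) ^ ((1 : ℝ) / ((m * k : ℕ) : ℝ)))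
        Filter.atTop (nhds 1) := hgrowth.comp htop
    have hlb : ∀ᶠ m : ℕ in Filter.atTop,
        (1 + ε) ^ ((1 : ℝ) / k) ≤ (Nat.card (B (m * k)) : ℝ) ^ ((1 : ℝ) / ((m * k : ℕ) : ℝ)) := by
      filter_upwards [Filter.eventually_ge_atTop 1] with m hm
      have hmk : (0 : ℝ) < (m * k : ℕ) := by
        have : 1 ≤ m * k := Nat.one_le_iff_ne_zero.2 (Nat.mul_ne_zero (by omega) (by omega))
        exact_mod_cast this
      have h1 : ((1 + ε) ^ m : ℝ) ^ ((1 : ℝ) / (m * k : ℕ)) ≤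
          (Nat.card (B (m * k)) : ℝ) ^ ((1 : ℝ) / (m * k : ℕ)) := by
        apply Real.rpow_le_rpow (by positivity) _ (by positivity)
        rw [haN]; exact hgrow m
      refine le_trans (le_of_eq ?_) h1
      rw [← Real.rpow_natCast (1 + ε) m, ← Real.rpow_mul (by linarith)]
      congr 1
      have hm' : (m : ℝ) ≠ 0 := by exact_mod_cast Nat.one_le_iff_ne_zero.1 hm
      have hk' : (k : ℝ) ≠ 0 := by exact_mod_cast Nat.pos_iff_ne_zero.1 hkpos
      rw [Nat.cast_mul]
      field_simp
    have := ge_of_tendsto hsub hlb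
    have hgt : (1 : ℝ) < (1 + ε) ^ ((1 : ℝ) / k) := by
      rw [Real.one_lt_rpow_iff (by linarith)]
      left
      constructor
      · linarith
      · positivity
    linarith
  obtain ⟨n, hn⟩ := hkey
  -- the Følner set
  refine ⟨(hfin n).toFinset, ⟨1, (hfin n).mem_toFinset.2 (hone n)⟩, fun g hg => ?_⟩
  set F := (hfin n).toFinset with hF
  set gF := F.image (fun x => g * x) with hgF
  have hcardgF : gF.card = F.card := Finset.card_image_of_injective _ (mul_right_injective g)
  have hunion : F ∪ gF ⊆ (hfin (n + k)).toFinset := by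
    intro x hx
    rw [Set.Finite.mem_toFinset]
    rcases Finset.mem_union.1 hx with h | h
    · exact hmono (Nat.le_add_right n k) ((hfin n).mem_toFinset.1 h)
    · obtain ⟨y, hy, rfl⟩ := Finset.mem_image.1 h
      have : g * y ∈ B (k + n) := hmul (hkball g hg) ((hfin n).mem_toFinset.1 hy)
      rwa [Nat.add_comm k n] at this
  have hcardU : ((F ∪ gF).card : ℝ) ≤ a (n + k) :=
    Nat.cast_le.2 (Finset.card_le_card hunion)
  have hie := Finset.card_union_add_card_inter F gF
  have hie' : ((F ∪ gF).card : ℝ) + ((F ∩ gF).card : ℝ) = (F.card : ℝ) + (gF.card : ℝ) := by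
    exact_mod_cast congrArg (Nat.cast : ℕ → ℝ) hie
  have hFa : (F.card : ℝ) = a n := by norm_num [hF, ha]
  rw [hcardgF, hFa] at hie'
  have : (1 - ε) * (a n : ℝ) ≤ ((F ∩ gF).card : ℝ) := by
    have := hn
    linarith
  rw [hFa]
  exact this
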